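/- Let θ(z) = −(z⁸ + 14z⁴ + 1)³/(108 z⁴ (z⁴ − 1)⁴), let V(z) = 3z⁴ − 4z³, and let θ₁(z) = (((1+i)/6)z² − (i/3)z + ((1−i)/6)) · (z⁴ + 2z³ + 2z² − 2z + 1) / ((z² + 1)(z + 1)(z − 1)z). Then θ = V ∘ θ₁ as rational functions, i.e., θ(z) = V(θ₁(z)) for all z ∈ ℂ where both sides are defined. -/

import Mathlib

set_option maxHeartbeats 4000000 in
set_option maxRecDepth 100000 in
open Complex in
/-- `θ = V ∘ θ₁` for `θ(z) = −(z⁸ + 14z⁴ + 1)³/(108 z⁴ (z⁴ − 1)⁴)`, `V(z) = 3z⁴ − 4z³` and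
`θ₁(z) = (((1+i)/6)z² − (i/3)z + ((1−i)/6))(z⁴ + 2z³ + 2z² − 2z + 1)/((z² + 1)(z + 1)(z − 1)z)`:
the identity `θ(z) = V(θ₁(z))` holds for every `z ∈ ℂ` where both sides are defined. -/
theorem stmt10 (z t : ℂ)
    (hθ : z ^ 4 * (z ^ 4 - 1) ≠ 0)
    (hθ₁ : (z ^ 2 + 1) * (z + 1) * (z - 1) * z ≠ 0)
    (ht : t = (((1 + I) / 6) * z ^ 2 - (I / 3) * z + (1 - I) / 6) *
        (z ^ 4 + 2 * z ^ 3 + 2 * z ^ 2 - 2 * z + 1) /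
      ((z ^ 2 + 1) * (z + 1) * (z - 1) * z)) :
    -(z ^ 8 + 14 * z ^ 4 + 1) ^ 3 / (108 * z ^ 4 * (z ^ 4 - 1) ^ 4) =
      3 * t ^ 4 - 4 * t ^ 3 := by
  subst ht
  have h1 : z ^ 4 ≠ 0 := left_ne_zero_of_mul hθ
  have h2 : z ^ 4 - 1 ≠ 0 := right_ne_zero_of_mul hθ
  have hi2 : (I:ℂ) ^ 2 = -1 := Complex.I_sq
  have hi3 : (I:ℂ) ^ 3 = -I := by rw [pow_succ, hi2]; ring
  have hi4 : (I:ℂ) ^ 4 = 1 := Complex.I_pow_four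
  have hz : z ≠ 0 := right_ne_zero_of_mul hθ₁
  have hm : z - 1 ≠ 0 := right_ne_zero_of_mul (left_ne_zero_of_mul hθ₁)
  have hp : z + 1 ≠ 0 := right_ne_zero_of_mul (left_ne_zero_of_mul (left_ne_zero_of_mul hθ₁))
  have hq : z ^ 2 + 1 ≠ 0 := left_ne_zero_of_mul (left_ne_zero_of_mul (left_ne_zero_of_mul hθ₁))
  field_simp
  ring_nf
  simp only [hi2, hi3, hi4]
  ring
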